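/- Signed determinant formula valid for arbitrary (not necessarily well-centered) triangles: let x₀, x₁, x₂ be a positively oriented triangle in the Euclidean plane (i.e. det [[x₀¹, x₀², 1], [x₁¹, x₁², 1], [x₂¹, x₂², 1]] > 0) with circumcenter C = (x_c, y_c). Then the FEM coefficient d₀ = l₁·l₂·cos θ₀/(4|t|) satisfies d₀ = −(1/l₀²)·det [[x₁¹, x₁², 1], [x_c, y_c, 1], [x₂¹, x₂², 1]]; in particular the signed ratio e₀/l₀ computed from this determinant equals d₀ even when the circumcenter lies outside the triangle, where the right-hand side may take negative values. -/

import Mathlib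

open EuclideanGeometry Real MeasureTheory

section FemAux

open MeasureTheory Set Pointwise intervalIntegral

lemma vol_S2 : volume {p : ℝ × ℝ | 0 ≤ p.1 ∧ 0 ≤ p.2 ∧ p.1 + p.2 ≤ 1} = ENNReal.ofReal (1/2) := by
  set S : Set (ℝ × ℝ) := {p : ℝ × ℝ | 0 ≤ p.1 ∧ 0 ≤ p.2 ∧ p.1 + p.2 ≤ 1} with hS
  set R : Set (ℝ × ℝ) := regionBetween (fun _ => (0:ℝ)) (fun x => 1 - x) (Ioo 0 1) with hR
  have hSconv : Convex ℝ S := by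
    intro p hp q hq a b ha hb hab
    simp only [hS, mem_setOf_eq, Prod.fst_add, Prod.snd_add, Prod.smul_fst, Prod.smul_snd,
      smul_eq_mul] at *
    refine ⟨by nlinarith [hp.1, hq.1], by nlinarith [hp.2.1, hq.2.1], by nlinarith [hp.2.2, hq.2.2]⟩
  have hRS : R ⊆ S := by
    rintro ⟨x, y⟩ h
    simp only [hR, regionBetween, mem_setOf_eq, mem_Ioo] at h
    exact ⟨h.1.1.le, h.2.1.le, by linarith [h.2.2]⟩
  have hint : interior S ⊆ R := by
    rintro ⟨x, y⟩ h
    rw [mem_interior_iff_mem_nhds, Metric.mem_nhds_iff] at h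
    obtain ⟨ε, hε, hball⟩ := h
    have hd : ∀ u v : ℝ, |u| < ε → |v| < ε → ((x + u, y + v) : ℝ × ℝ) ∈ S := by
      intro u v hu hv
      apply hball
      rw [Metric.mem_ball, Prod.dist_eq, max_lt_iff]
      constructor <;> simp [Real.dist_eq] <;> assumption
    have habs : |(-(ε/2) : ℝ)| < ε := by rw [abs_neg, abs_of_nonneg (by linarith)]; linarith
    have habs' : |(ε/2 : ℝ)| < ε := by rw [abs_of_nonneg (by linarith)]; linarith
    have habs0 : |(0:ℝ)| < ε := by simpa using hε
    have h1 := hd (-(ε/2)) 0 habs habs0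
    have h2 := hd 0 (-(ε/2)) habs0 habs
    have h3 := hd (ε/2) 0 habs' habs0
    simp only [hS, mem_setOf_eq, add_zero] at h1 h2 h3
    simp only [hR, regionBetween, mem_setOf_eq, mem_Ioo]
    refine ⟨⟨by linarith [h1.1], by linarith [h3.2.2, h2.2.1]⟩, by linarith [h2.2.1],
      by linarith [h3.2.2]⟩
  have hvolR : volume R = ENNReal.ofReal (1/2) := by
    rw [Measure.volume_eq_prod, hR,
      volume_regionBetween_eq_integral
        (integrableOn_const (by simp) (by simp))
        ((intervalIntegrable_iff_integrableOn_Ioo_of_le zero_le_one).1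
          ((_root_.intervalIntegrable_const (c := (1:ℝ))).sub intervalIntegrable_id))
        measurableSet_Ioo (fun x hx => by simp only [mem_Ioo] at hx; linarith [hx.2])]
    congr 1
    simp only [Pi.sub_apply, sub_zero]
    rw [← MeasureTheory.integral_Ioc_eq_integral_Ioo,
      ← intervalIntegral.integral_of_le zero_le_one,
      intervalIntegral.integral_sub _root_.intervalIntegrable_const
        intervalIntegrable_id]
    simp [integral_id]
    norm_num
  have hfr : volume (frontier S) = 0 := hSconv.addHaar_frontier _
  have hle : volume S ≤ ENNReal.ofReal (1/2) := by
    have hsub : S ⊆ R ∪ frontier S := by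
      intro p hp
      by_cases h : p ∈ interior S
      · exact Or.inl (hint h)
      · exact Or.inr ⟨subset_closure hp, h⟩
    calc volume S ≤ volume R + volume (frontier S) :=
          le_trans (measure_mono hsub) (measure_union_le _ _)
    _ = ENNReal.ofReal (1/2) := by rw [hvolR, hfr, add_zero]
  exact le_antisymm hle (hvolR ▸ measure_mono hRS)

noncomputable abbrev E2 := EuclideanSpace ℝ (Fin 2)

lemma vol_T : volume {p : E2 | 0 ≤ p 0 ∧ 0 ≤ p 1 ∧ p 0 + p 1 ≤ 1} = ENNReal.ofReal (1/2) := by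
  have hms : MeasurableSet {p : ℝ × ℝ | 0 ≤ p.1 ∧ 0 ≤ p.2 ∧ p.1 + p.2 ≤ 1} := by
    apply MeasurableSet.inter
    · exact measurableSet_le measurable_const measurable_fst
    apply MeasurableSet.inter
    · exact measurableSet_le measurable_const measurable_snd
    · exact measurableSet_le (measurable_fst.add measurable_snd) measurable_const
  have h1 : volume {f : Fin 2 → ℝ | 0 ≤ f 0 ∧ 0 ≤ f 1 ∧ f 0 + f 1 ≤ 1}
      = ENNReal.ofReal (1/2) := by
    rw [← vol_S2, ← (volume_preserving_finTwoArrow ℝ).measure_preimage hms.nullMeasurableSet]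
    rfl
  have hms2 : MeasurableSet {f : Fin 2 → ℝ | 0 ≤ f 0 ∧ 0 ≤ f 1 ∧ f 0 + f 1 ≤ 1} := by
    apply MeasurableSet.inter
    · exact measurableSet_le measurable_const (measurable_pi_apply 0)
    apply MeasurableSet.inter
    · exact measurableSet_le measurable_const (measurable_pi_apply 1)
    · exact measurableSet_le ((measurable_pi_apply 0).add (measurable_pi_apply 1)) measurable_const
  rw [← h1, ← (EuclideanSpace.volume_preserving_symm_measurableEquiv_toLp (Fin 2)).measure_preimage
    hms2.nullMeasurableSet]
  rfl

lemma hull_eq_T : convexHull ℝ {(0 : E2), EuclideanSpace.single 0 1, EuclideanSpace.single 1 1}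
    = {p : E2 | 0 ≤ p 0 ∧ 0 ≤ p 1 ∧ p 0 + p 1 ≤ 1} := by
  apply Subset.antisymm
  · apply convexHull_min
    · rintro p (rfl | rfl | rfl) <;>
        simp [EuclideanSpace.single_apply, mem_setOf_eq]
    · intro p hp q hq a b ha hb hab
      simp only [mem_setOf_eq, PiLp.add_apply, PiLp.smul_apply, smul_eq_mul] at *
      refine ⟨by nlinarith [hp.1, hq.1], by nlinarith [hp.2.1, hq.2.1],
        by nlinarith [hp.2.2, hq.2.2]⟩
  · intro p hp
    obtain ⟨h0, h1, hsum⟩ := hp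
    set K := convexHull ℝ {(0 : E2), EuclideanSpace.single 0 1, EuclideanSpace.single 1 1} with hK
    have hKc : Convex ℝ K := convex_convexHull _ _
    have m0 : (0 : E2) ∈ K := subset_convexHull _ _ (by simp)
    have m1 : (EuclideanSpace.single 0 1 : E2) ∈ K := subset_convexHull _ _ (by simp)
    have m2 : (EuclideanSpace.single 1 1 : E2) ∈ K := subset_convexHull _ _ (by simp)
    rcases eq_or_lt_of_le (by linarith : (0:ℝ) ≤ p 0 + p 1) with hs | hs
    · have hp0 : p 0 = 0 := by linarith
      have hp1 : p 1 = 0 := by linarith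
      have : p = 0 := by
        ext i
        fin_cases i <;> simpa [hp0, hp1]
      rw [this]; exact m0
    · set s := p 0 + p 1 with hsdef
      have hm : ((p 0 / s) • (EuclideanSpace.single 0 1 : E2)
          + (p 1 / s) • (EuclideanSpace.single 1 1 : E2)) ∈ K :=
        hKc m1 m2 (div_nonneg h0 hs.le) (div_nonneg h1 hs.le) (by field_simp; exact hsdef.symm)
      have hp' : p = s • ((p 0 / s) • (EuclideanSpace.single 0 1 : E2)
          + (p 1 / s) • (EuclideanSpace.single 1 1 : E2)) + (1 - s) • (0 : E2) := by
        ext i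
        fin_cases i <;>
          · simp [PiLp.add_apply, PiLp.smul_apply, EuclideanSpace.single_apply]
            field_simp
      rw [hp']
      exact hKc hm m0 hs.le (by linarith) (by ring)

lemma vol_hull (y₀ y₁ y₂ : E2) :
    volume (convexHull ℝ {y₀, y₁, y₂}) = ENNReal.ofReal
      (|(y₁ 0 - y₀ 0) * (y₂ 1 - y₀ 1) - (y₂ 0 - y₀ 0) * (y₁ 1 - y₀ 1)| / 2) := by
  classical
  set v1 : E2 := y₁ - y₀ with hv1
  set v2 : E2 := y₂ - y₀ with hv2
  set b := (EuclideanSpace.basisFun (Fin 2) ℝ).toBasis with hb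
  set L : E2 →ₗ[ℝ] E2 := b.constr ℝ ![v1, v2] with hL
  have hLb : ∀ i, L (b i) = ![v1, v2] i := fun i => b.constr_basis ℝ _ i
  have hdet : LinearMap.det L = (v1 0) * (v2 1) - (v2 0) * (v1 1) := by
    rw [← LinearMap.det_toMatrix b]
    have hM : LinearMap.toMatrix b b L = !![v1 0, v2 0; v1 1, v2 1] := by
      ext i j
      rw [LinearMap.toMatrix_apply, hLb]
      fin_cases i <;> fin_cases j <;>
        simp [hb, OrthonormalBasis.coe_toBasis_repr_apply, EuclideanSpace.basisFun_repr]
    rw [hM, Matrix.det_fin_two_of]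
  have himg : convexHull ℝ {y₀, y₁, y₂} = y₀ +ᵥ
      (L '' {p : E2 | 0 ≤ p 0 ∧ 0 ≤ p 1 ∧ p 0 + p 1 ≤ 1}) := by
    rw [← hull_eq_T, LinearMap.image_convexHull, ← convexHull_vadd]
    congr 1
    have himgset : L '' {(0 : E2), EuclideanSpace.single 0 1, EuclideanSpace.single 1 1}
        = {0, v1, v2} := by
      have e0 : (EuclideanSpace.single 0 1 : E2) = b 0 := by
        simp [hb, EuclideanSpace.basisFun_apply]
      have e1 : (EuclideanSpace.single 1 1 : E2) = b 1 := by
        simp [hb, EuclideanSpace.basisFun_apply]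
      rw [Set.image_insert_eq, Set.image_insert_eq, Set.image_singleton, map_zero, e0, e1,
        hLb 0, hLb 1]
      simp
    rw [himgset, ← Set.image_vadd, Set.image_insert_eq, Set.image_insert_eq,
      Set.image_singleton]
    simp only [vadd_eq_add, add_zero, hv1, hv2]
    rw [add_sub_cancel, add_sub_cancel]
  rw [himg, measure_vadd, Measure.addHaar_image_linearMap, hdet, vol_T,
    ← ENNReal.ofReal_mul (abs_nonneg _)]
  congr 1
  rw [hv1, hv2]
  simp only [PiLp.sub_apply]
  ring_nf

lemma dist_sq_eq (x y : E2) : dist x y ^ 2 = (x 0 - y 0) ^ 2 + (x 1 - y 1) ^ 2 := by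
  rw [EuclideanSpace.dist_eq, Real.sq_sqrt (by positivity)]
  simp [Fin.sum_univ_two, Real.dist_eq, sq_abs]

end FemAux

/-- Signed determinant formula, valid for arbitrary (not necessarily well-centered)
triangles: if `x₀x₁x₂` is positively oriented (the determinant with rows
`(x₀ 0, x₀ 1, 1)`, `(x₁ 0, x₁ 1, 1)`, `(x₂ 0, x₂ 1, 1)` is positive) and `C` is the
circumcenter, then the FEM coefficient `d₀ = l₁ * l₂ * cos θ₀ / (4 * |t|)` equals
`-(1/l₀²)` times the determinant with rows `(x₁ 0, x₁ 1, 1)`, `(C 0, C 1, 1)`,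
`(x₂ 0, x₂ 1, 1)`; the right-hand side may take negative values. -/
theorem fem_coeff_eq_signed_det
    (x₀ x₁ x₂ C : EuclideanSpace ℝ (Fin 2))
    (hind : AffineIndependent ℝ ![x₀, x₁, x₂])
    (h01 : dist C x₀ = dist C x₁) (h02 : dist C x₀ = dist C x₂)
    (horient : 0 < Matrix.det !![x₀ 0, x₀ 1, 1; x₁ 0, x₁ 1, 1; x₂ 0, x₂ 1, 1]) :
    dist x₀ x₂ * dist x₀ x₁ * Real.cos (∠ x₁ x₀ x₂) /
        (4 * (volume (convexHull ℝ {x₀, x₁, x₂})).toReal) =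
      -(1 / (dist x₁ x₂) ^ 2) *
        Matrix.det !![x₁ 0, x₁ 1, 1; C 0, C 1, 1; x₂ 0, x₂ 1, 1] := by
  have hne01 : x₀ ≠ x₁ := by
    intro h
    exact (hind.injective.ne (show (0 : Fin 3) ≠ 1 by decide)) (by simpa using h)
  have hne02 : x₀ ≠ x₂ := by
    intro h
    exact (hind.injective.ne (show (0 : Fin 3) ≠ 2 by decide)) (by simpa using h)
  have hne12 : x₁ ≠ x₂ := by
    intro h
    exact (hind.injective.ne (show (1 : Fin 3) ≠ 2 by decide)) (by simpa using h)
  -- numerator = inner product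
  have hnorm1 : ‖x₁ - x₀‖ ≠ 0 := norm_ne_zero_iff.2 (sub_ne_zero.2 hne01.symm)
  have hnorm2 : ‖x₂ - x₀‖ ≠ 0 := norm_ne_zero_iff.2 (sub_ne_zero.2 hne02.symm)
  have hangle : dist x₀ x₂ * dist x₀ x₁ * Real.cos (∠ x₁ x₀ x₂)
      = inner ℝ (x₁ - x₀) (x₂ - x₀) := by
    have h1 : ∠ x₁ x₀ x₂ = InnerProductGeometry.angle (x₁ - x₀) (x₂ - x₀) := rfl
    rw [h1, InnerProductGeometry.cos_angle, dist_eq_norm, norm_sub_rev x₀ x₂,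
      dist_eq_norm, norm_sub_rev x₀ x₁]
    field_simp
  have hinner : (inner ℝ (x₁ - x₀) (x₂ - x₀) : ℝ)
      = (x₁ 0 - x₀ 0) * (x₂ 0 - x₀ 0) + (x₁ 1 - x₀ 1) * (x₂ 1 - x₀ 1) := by
    simp [PiLp.inner_apply, Fin.sum_univ_two, RCLike.inner_apply, conj_trivial, PiLp.sub_apply]
    ring
  -- coordinates
  set a := x₀ 0; set b := x₀ 1; set c := x₁ 0; set d := x₁ 1
  set e := x₂ 0; set f := x₂ 1; set p := C 0; set q := C 1
  have hC1 : (p - a) ^ 2 + (q - b) ^ 2 = (p - c) ^ 2 + (q - d) ^ 2 := by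
    have := congrArg (· ^ 2) h01
    simpa [dist_sq_eq] using this
  have hC2 : (p - a) ^ 2 + (q - b) ^ 2 = (p - e) ^ 2 + (q - f) ^ 2 := by
    have := congrArg (· ^ 2) h02
    simpa [dist_sq_eq] using this
  have hl0 : dist x₁ x₂ ^ 2 = (c - e) ^ 2 + (d - f) ^ 2 := dist_sq_eq x₁ x₂
  have hcoord : c ≠ e ∨ d ≠ f := by
    by_contra h
    push_neg at h
    exact hne12 (by ext i; fin_cases i; exacts [h.1, h.2])
  have hl0pos : (0:ℝ) < (c - e) ^ 2 + (d - f) ^ 2 := by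
    rcases hcoord with h | h
    · have h' : 0 < |c - e| := abs_pos.2 (sub_ne_zero.2 h)
      nlinarith [sq_abs (c - e), sq_nonneg (d - f)]
    · have h' : 0 < |d - f| := abs_pos.2 (sub_ne_zero.2 h)
      nlinarith [sq_abs (d - f), sq_nonneg (c - e)]
  rw [show !![a, b, 1; c, d, 1; e, f, 1].det
      = (c - a) * (f - b) - (e - a) * (d - b) from by
    simp [Matrix.det_fin_three, Matrix.vecHead, Matrix.vecTail]; ring] at horient
  have hD : (0:ℝ) < (c - a) * (f - b) - (e - a) * (d - b) := horient
  have hvol : (volume (convexHull ℝ {x₀, x₁, x₂})).toReal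
      = ((c - a) * (f - b) - (e - a) * (d - b)) / 2 := by
    rw [vol_hull, ENNReal.toReal_ofReal (by positivity)]
    rw [abs_of_pos hD]
  rw [hangle, hinner, hvol, hl0,
    show !![c, d, 1; p, q, 1; e, f, 1].det
      = c * (q * 1 - 1 * f) - d * (p * 1 - 1 * e) + 1 * (p * f - q * e) from by
    simp [Matrix.det_fin_three, Matrix.vecHead, Matrix.vecTail]; ring]
  have key : ((c - a) * (e - a) + (d - b) * (f - b)) * ((c - e) ^ 2 + (d - f) ^ 2)
      = -(2 * ((c - a) * (f - b) - (e - a) * (d - b)) *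
        (c * (q * 1 - 1 * f) - d * (p * 1 - 1 * e) + 1 * (p * f - q * e))) := by
    linear_combination ((f - d) * (f - b) + (e - c) * (e - a)) * hC1 +
      ((c - a) * (c - e) + (b - d) * (f - d)) * hC2
  have h4D : (4 : ℝ) * (((c - a) * (f - b) - (e - a) * (d - b)) / 2) ≠ 0 := by positivity
  have hl0ne : ((c - e) ^ 2 + (d - f) ^ 2) ≠ 0 := ne_of_gt hl0pos
  rw [div_eq_iff h4D]
  apply mul_left_cancel₀ hl0ne
  rw [show ((c - e) ^ 2 + (d - f) ^ 2) *
        (-(1 / ((c - e) ^ 2 + (d - f) ^ 2)) *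
          (c * (q * 1 - 1 * f) - d * (p * 1 - 1 * e) + 1 * (p * f - q * e)) *
          (4 * (((c - a) * (f - b) - (e - a) * (d - b)) / 2)))
      = -((((c - e) ^ 2 + (d - f) ^ 2) * (1 / ((c - e) ^ 2 + (d - f) ^ 2))) *
          ((c * (q * 1 - 1 * f) - d * (p * 1 - 1 * e) + 1 * (p * f - q * e)) *
            (4 * (((c - a) * (f - b) - (e - a) * (d - b)) / 2)))) from by ring,
    mul_one_div, div_self hl0ne, one_mul]
  linear_combination key
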